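/- arXiv:1906.07219 — 3 statements merged into one kernel-verified Lean document; each statement's English description precedes it below -/
import Mathlib

section
/- For an explicit Runge-Kutta method with r ≥ 2 stages, if the stability region S (the set of complex z with |P(z)| ≤ 1, where P is the degree-≤r stability polynomial with P(0)=1 and P'(0)=1) contains the imaginary segment i·[a,b] with a < 0 < b, then [a,b] ⊆ [-(r-1), r-1]. -/
open Polynomial Finset Real Polynomial.Chebyshev

namespace IASL

noncomputable def xn (m i : ℕ) : ℝ := Real.cos (i * π / m)

variable {m : ℕ}

lemma ang_nonneg (i : ℕ) : (0:ℝ) ≤ i * π / m := by positivity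

lemma ang_le_pi (hm : 1 ≤ m) {i : ℕ} (hi : i ≤ m) : (i:ℝ) * π / m ≤ π := by
  rw [div_le_iff₀ (by exact_mod_cast hm : (0:ℝ) < m)]
  have : (i:ℝ) ≤ m := by exact_mod_cast hi
  nlinarith [Real.pi_pos]

lemma xn_strictAnti (hm : 1 ≤ m) {i j : ℕ} (hij : i < j) (hj : j ≤ m) :
    xn m j < xn m i := by
  have h0 : (0:ℝ) < m := by exact_mod_cast hm
  apply Real.strictAntiOn_cos
  · exact ⟨ang_nonneg i, ang_le_pi hm (le_trans (le_of_lt hij) hj)⟩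
  · exact ⟨ang_nonneg j, ang_le_pi hm hj⟩
  · have hij' : (i:ℝ) < j := by exact_mod_cast hij
    have := Real.pi_pos
    gcongr

lemma xn_injOn (hm : 1 ≤ m) {i j : ℕ} (hi : i ≤ m) (hj : j ≤ m)
    (h : xn m i = xn m j) : i = j := by
  rcases lt_trichotomy i j with h'|h'|h'
  · exact absurd h (ne_of_gt (xn_strictAnti hm h' hj))
  · exact h'
  · exact absurd h (ne_of_lt (xn_strictAnti hm h' hi))

lemma xn_reflect (hm : 1 ≤ m) {i : ℕ} (hi : i ≤ m) : xn m (m - i) = - xn m i := by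
  have h0 : (0:ℝ) < m := by exact_mod_cast hm
  have : ((m - i : ℕ) : ℝ) = m - i := by
    rw [Nat.cast_sub hi]
  unfold xn
  rw [this, ← Real.cos_pi_sub]
  congr 1
  field_simp

lemma xn_mem (hm : 1 ≤ m) (i : ℕ) : xn m i ∈ Set.Icc (-1:ℝ) 1 :=
  ⟨Real.neg_one_le_cos _, Real.cos_le_one _⟩

lemma xn_pos (hm : 1 ≤ m) {i : ℕ} (h2 : 2 * i < m) : 0 < xn m i := by
  have h0 : (0:ℝ) < m := by exact_mod_cast hm
  apply Real.cos_pos_of_mem_Ioo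
  constructor
  · have := Real.pi_pos
    have := ang_nonneg (m := m) i
    linarith
  · rw [div_lt_iff₀ h0]
    have : (2*i:ℝ) < m := by exact_mod_cast h2
    nlinarith [Real.pi_pos]

lemma xn_neg (hm : 1 ≤ m) {i : ℕ} (h2 : m < 2 * i) (hi : i ≤ m) : xn m i < 0 := by
  have h0 : (0:ℝ) < m := by exact_mod_cast hm
  have hlt : π / 2 < (i:ℝ) * π / m := by
    rw [lt_div_iff₀ h0]
    have : (m:ℝ) < 2*i := by exact_mod_cast h2
    nlinarith [Real.pi_pos]
  rcases lt_or_eq_of_le (ang_le_pi hm hi) with h | h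
  · exact Real.cos_neg_of_pi_div_two_lt_of_lt hlt (by linarith [Real.pi_pos])
  · rw [xn, h, Real.cos_pi]; norm_num

lemma xn_ne_zero (hm : 1 ≤ m) {i : ℕ} (h2 : 2 * i ≠ m) (hi : i ≤ m) : xn m i ≠ 0 := by
  rcases lt_or_gt_of_ne h2 with h | h
  · exact ne_of_gt (xn_pos hm h)
  · exact ne_of_lt (xn_neg hm h hi)

lemma xn_half (hm : 1 ≤ m) (hme : Even m) : xn m (m / 2) = 0 := by
  obtain ⟨k, rfl⟩ := hme
  have hk : 1 ≤ k := by omega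
  have : k + k = 2 * k := by ring
  unfold xn
  rw [this, Nat.mul_div_cancel_left _ (by norm_num : 0 < 2)]
  have h0 : (0:ℝ) < 2*k := by positivity
  have : (k:ℝ) * π / (2*k : ℕ) = π / 2 := by
    push_cast
    field_simp
  rw [this, Real.cos_pi_div_two]

lemma derivative_finset_prod (s : Finset ℕ) (f : ℕ → Polynomial ℝ) :
    Polynomial.derivative (∏ j ∈ s, f j)
      = ∑ i ∈ s, (∏ j ∈ s.erase i, f j) * Polynomial.derivative (f i) := by
  classical
  induction s using Finset.induction_on with
  | empty => simp
  | insert a s' ha ih =>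
    rw [Finset.prod_insert ha, derivative_mul, ih, Finset.sum_insert ha]
    rw [Finset.erase_insert ha, Finset.mul_sum]
    congr 1
    · ring
    apply Finset.sum_congr rfl
    intro i hi
    rw [Finset.erase_insert_of_ne (by rintro rfl; exact ha hi)]
    rw [Finset.prod_insert (by simp [ha])]
    ring


noncomputable def Np (m i : ℕ) : Polynomial ℝ :=
  ∏ j ∈ (range (m+1)).erase i, (X - C (xn m j))

noncomputable def Dv (m i : ℕ) : ℝ := (Np m i).eval (xn m i)

lemma Np_natDegree_le {m i : ℕ} (hi : i ≤ m) : (Np m i).natDegree ≤ m := by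
  refine le_trans (Polynomial.natDegree_prod_le _ _) ?_
  have : ∀ j ∈ (range (m+1)).erase i, (X - C (xn m j)).natDegree = 1 := by
    intro j _; exact Polynomial.natDegree_X_sub_C _
  rw [Finset.sum_congr rfl this]
  simp only [Finset.sum_const, smul_eq_mul, mul_one]
  rw [Finset.card_erase_of_mem (by simp [Nat.lt_succ_iff, hi]), Finset.card_range]
  omega

lemma eval_Np_other {m i l : ℕ} (hl : l ≤ m) (hne : l ≠ i) :
    (Np m i).eval (xn m l) = 0 := by
  rw [Np, Polynomial.eval_prod]
  apply Finset.prod_eq_zero (i := l)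
  · simp [Finset.mem_erase, hne, Nat.lt_succ_iff, hl]
  · simp

lemma Dv_ne_zero {m : ℕ} (hm : 1 ≤ m) {i : ℕ} (hi : i ≤ m) : Dv m i ≠ 0 := by
  rw [Dv, Np, Polynomial.eval_prod]
  rw [Finset.prod_ne_zero_iff]
  intro j hj
  simp only [Finset.mem_erase, Finset.mem_range, Nat.lt_succ_iff] at hj
  simp only [Polynomial.eval_sub, Polynomial.eval_X, Polynomial.eval_C, sub_ne_zero]
  exact fun h => hj.1 (xn_injOn hm hj.2 hi h.symm)

lemma interp {m : ℕ} (hm : 1 ≤ m) (f : Polynomial ℝ) (hdeg : f.natDegree ≤ m) :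
    f = ∑ i ∈ range (m+1), C (f.eval (xn m i) / Dv m i) * Np m i := by
  have key : (f - ∑ i ∈ range (m+1), C (f.eval (xn m i) / Dv m i) * Np m i) = 0 := by
    apply Polynomial.eq_zero_of_natDegree_lt_card_of_eval_eq_zero _
      (f := fun k : Fin (m+1) => xn m k)
    · intro a b hab
      exact Fin.ext (xn_injOn hm (Nat.lt_succ_iff.mp a.2) (Nat.lt_succ_iff.mp b.2) hab)
    · intro l
      have hl : (l:ℕ) ≤ m := Nat.lt_succ_iff.mp l.2
      simp only [Polynomial.eval_sub, Polynomial.eval_finset_sum, Polynomial.eval_mul,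
        Polynomial.eval_C]
      rw [Finset.sum_eq_single (l:ℕ)]
      · show eval _ f - eval _ f / Dv m l * Dv m (l:ℕ) = 0
        rw [div_mul_cancel₀ _ (Dv_ne_zero hm hl)]
        ring
      · intro j hj hne
        rw [eval_Np_other hl (Ne.symm hne), mul_zero]
      · intro h; exact absurd (Finset.mem_range.mpr (Nat.lt_succ_iff.mpr hl)) h
    · rw [Fintype.card_fin]
      have h1 : (∑ i ∈ range (m+1), C (f.eval (xn m i) / Dv m i) * Np m i).natDegree ≤ m := by
        apply Polynomial.natDegree_sum_le_of_forall_le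
        intro i hmem
        refine le_trans (Polynomial.natDegree_mul_le) ?_
        simp only [Polynomial.natDegree_C, zero_add]
        exact Np_natDegree_le (Nat.lt_succ_iff.mp (Finset.mem_range.mp hmem))
      have := Polynomial.natDegree_sub_le f (∑ i ∈ range (m+1), C (f.eval (xn m i) / Dv m i) * Np m i)
      omega
  exact (sub_eq_zero.mp key)

noncomputable def om (m : ℕ) : Polynomial ℝ :=
  ∏ j ∈ range (m+1), (X - C (xn m j))

lemma om_eq {m i : ℕ} (hi : i ≤ m) : om m = (X - C (xn m i)) * Np m i := by
  rw [om, Np]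
  exact (Finset.mul_prod_erase _ _ (by simp [Nat.lt_succ_iff, hi])).symm

lemma om_derivative (m : ℕ) :
    Polynomial.derivative (om m) = ∑ i ∈ range (m+1), Np m i := by
  rw [om, derivative_finset_prod]
  apply Finset.sum_congr rfl
  intro i _
  rw [Polynomial.derivative_sub, Polynomial.derivative_X, Polynomial.derivative_C]
  rw [sub_zero, mul_one]
  rfl

/-- value of `Np` at `0`. -/
noncomputable def uval (m i : ℕ) : ℝ := (Np m i).eval 0

lemma uval_eq (m i : ℕ) : uval m i = ∏ j ∈ (range (m+1)).erase i, (-(xn m j)) := by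
  rw [uval, Np, Polynomial.eval_prod]
  apply Finset.prod_congr rfl
  intro j _
  simp

lemma uval_reflect {m : ℕ} (hm : 1 ≤ m) {i : ℕ} (hi : i ≤ m) :
    uval m (m - i) = (-1)^m * uval m i := by
  rw [uval_eq, uval_eq]
  have h1 : ∏ j ∈ (range (m+1)).erase (m-i), (-(xn m j))
      = ∏ k ∈ (range (m+1)).erase i, xn m k := by
    apply Finset.prod_nbij' (fun a => m - a) (fun a => m - a)
    · intro a ha
      simp only [Finset.mem_erase, Finset.mem_range, Nat.lt_succ_iff] at *
      omega
    · intro a ha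
      simp only [Finset.mem_erase, Finset.mem_range, Nat.lt_succ_iff] at *
      omega
    · intro a ha
      simp only [Finset.mem_erase, Finset.mem_range, Nat.lt_succ_iff] at ha
      omega
    · intro a ha
      simp only [Finset.mem_erase, Finset.mem_range, Nat.lt_succ_iff] at ha
      omega
    · intro a ha
      simp only [Finset.mem_erase, Finset.mem_range, Nat.lt_succ_iff] at ha
      exact (xn_reflect hm ha.2).symm
  rw [h1]
  have hc : #((range (m+1)).erase i) = m := by
    rw [Finset.card_erase_of_mem (by simp [Nat.lt_succ_iff, hi]), Finset.card_range]
    omega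
  calc ∏ k ∈ (range (m+1)).erase i, xn m k
      = ∏ k ∈ (range (m+1)).erase i, ((-1) * (-(xn m k))) := by
        apply Finset.prod_congr rfl; intro k _; ring
    _ = (∏ _k ∈ (range (m+1)).erase i, (-1:ℝ)) * ∏ k ∈ (range (m+1)).erase i, (-(xn m k)) :=
        Finset.prod_mul_distrib
    _ = (-1)^m * ∏ k ∈ (range (m+1)).erase i, (-(xn m k)) := by
        rw [Finset.prod_const, hc]

lemma prod_pos_split {m t : ℕ} (ht : t ≤ m) (f : ℕ → ℝ)
    (hneg : ∀ j, j < t → f j < 0) (hpos : ∀ j, t < j → j ≤ m → 0 < f j) :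
    0 < (-1)^t * ∏ j ∈ (range (m+1)).erase t, f j := by
  have hsplit : (range (m+1)).erase t = range t ∪ Finset.Ico (t+1) (m+1) := by
    ext x; simp only [Finset.mem_erase, Finset.mem_range, Finset.mem_union, Finset.mem_Ico]
    omega
  rw [hsplit, Finset.prod_union (by
    rw [Finset.disjoint_left]
    intro x hx1 hx2
    simp only [Finset.mem_range] at hx1
    simp only [Finset.mem_Ico] at hx2
    omega)]
  have h2 : 0 < ∏ j ∈ Finset.Ico (t+1) (m+1), f j := by
    apply Finset.prod_pos
    intro j hj
    simp only [Finset.mem_Ico] at hj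
    exact hpos j hj.1 (by omega)
  have h1 : 0 < (-1:ℝ)^t * ∏ j ∈ range t, f j := by
    have he : (-1:ℝ)^t * ∏ j ∈ range t, f j = ∏ j ∈ range t, (-(f j)) := by
      calc (-1:ℝ)^t * ∏ j ∈ range t, f j
          = (∏ _j ∈ range t, (-1:ℝ)) * ∏ j ∈ range t, f j := by
            rw [Finset.prod_const, Finset.card_range]
        _ = ∏ j ∈ range t, (-(f j)) := by
            rw [← Finset.prod_mul_distrib]
            apply Finset.prod_congr rfl; intro k _; ring
    rw [he]
    apply Finset.prod_pos
    intro j hj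
    simp only [Finset.mem_range] at hj
    linarith [hneg j hj]
  calc (0:ℝ) < ((-1)^t * ∏ j ∈ range t, f j) * ∏ j ∈ Finset.Ico (t+1) (m+1), f j :=
        mul_pos h1 h2
    _ = (-1)^t * ((∏ j ∈ range t, f j) * ∏ j ∈ Finset.Ico (t+1) (m+1), f j) := by ring

lemma Dv_sign {m : ℕ} (hm : 1 ≤ m) {i : ℕ} (hi : i ≤ m) : 0 < (-1)^i * Dv m i := by
  have : Dv m i = ∏ j ∈ (range (m+1)).erase i, (xn m i - xn m j) := by
    rw [Dv, Np, Polynomial.eval_prod]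
    apply Finset.prod_congr rfl
    intro j _; simp
  rw [this]
  apply prod_pos_split hi
  · intro j hj
    have := xn_strictAnti hm hj hi
    linarith
  · intro j hj hjm
    have := xn_strictAnti hm hj hjm
    linarith

lemma sum_uval_zero {m : ℕ} (hmo : Odd m) :
    ∑ i ∈ range (m+1), uval m i = 0 := by
  have hm : 1 ≤ m := hmo.pos
  have h1 : ∑ i ∈ range (m+1), uval m i = ∑ i ∈ range (m+1), uval m (m - i) := by
    apply Finset.sum_nbij' (fun a => m - a) (fun a => m - a) <;>
      (intro a ha; simp only [Finset.mem_range, Nat.lt_succ_iff] at *) <;> try omega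
    congr 1
    omega
  have h2 : ∀ i ∈ range (m+1), uval m (m - i) = - uval m i := by
    intro i hi
    simp only [Finset.mem_range, Nat.lt_succ_iff] at hi
    rw [uval_reflect hm hi, Odd.neg_one_pow hmo]
    ring
  rw [Finset.sum_congr rfl h2, Finset.sum_neg_distrib] at h1
  linarith

lemma om_deriv_eval_zero {m : ℕ} (hmo : Odd m) :
    (Polynomial.derivative (om m)).eval 0 = 0 := by
  rw [om_derivative, Polynomial.eval_finset_sum]
  exact sum_uval_zero hmo

lemma Np_deriv_zero {m : ℕ} (hmo : Odd m) {i : ℕ} (hi : i ≤ m) :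
    (Polynomial.derivative (Np m i)).eval 0 = uval m i / xn m i := by
  have hm : 1 ≤ m := hmo.pos
  have hx : xn m i ≠ 0 := xn_ne_zero hm (by obtain ⟨k, hk⟩ := hmo; omega) hi
  have h1 : Polynomial.derivative (om m)
      = Np m i + (X - C (xn m i)) * Polynomial.derivative (Np m i) := by
    rw [om_eq hi, Polynomial.derivative_mul]
    simp
  have h2 := om_deriv_eval_zero hmo
  rw [h1] at h2
  simp only [Polynomial.eval_add, Polynomial.eval_mul, Polynomial.eval_sub,
    Polynomial.eval_X, Polynomial.eval_C] at h2
  have : uval m i - xn m i * (Polynomial.derivative (Np m i)).eval 0 = 0 := by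
    rw [uval]; linarith [h2]
  field_simp
  linarith [this]

lemma cos_nat_pi (i : ℕ) : Real.cos (i * Real.pi) = (-1)^i := by
  induction i with
  | zero => simp
  | succ k ih =>
    have : ((k+1 : ℕ) : ℝ) * Real.pi = k * Real.pi + Real.pi := by push_cast; ring
    rw [this, Real.cos_add_pi, ih]
    ring

lemma coeff_two_X_mul (p : Polynomial ℝ) (n : ℕ) :
    (2*X*p).coeff (n+1) = 2 * p.coeff n := by
  rw [mul_assoc, show (2:Polynomial ℝ) = C 2 from (map_ofNat Polynomial.C 2).symm, Polynomial.coeff_C_mul,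
    Polynomial.coeff_X_mul]

lemma coeff_two_X_mul_zero (p : Polynomial ℝ) : (2*X*p).coeff 0 = 0 := by
  rw [mul_assoc, show (2:Polynomial ℝ) = C 2 from (map_ofNat Polynomial.C 2).symm, Polynomial.coeff_C_mul,
    Polynomial.mul_coeff_zero]
  simp

lemma T_coeff012 (j : ℕ) :
    ((T ℝ (2*j)).coeff 0 = (-1)^j ∧ (T ℝ (2*j)).coeff 1 = 0
        ∧ (T ℝ (2*j)).coeff 2 = (-1)^(j+1)*(2*j^2))
    ∧ ((T ℝ (2*j+1)).coeff 0 = 0 ∧ (T ℝ (2*j+1)).coeff 1 = (-1)^j*(2*j+1)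
        ∧ (T ℝ (2*j+1)).coeff 2 = 0) := by
  induction j with
  | zero =>
    norm_num [T_zero, T_one, Polynomial.coeff_one, Polynomial.coeff_X]
  | succ k ih =>
    obtain ⟨⟨he0, he1, he2⟩, ho0, ho1, ho2⟩ := ih
    have hrec1 : T ℝ (2*(k+1)) = 2*X*T ℝ (2*k+1) - T ℝ (2*k) := by
      have := T_add_two ℝ (2*k)
      convert this using 2 <;> push_cast <;> ring
    have hrec2 : T ℝ (2*(k+1)+1) = 2*X*T ℝ (2*(k+1)) - T ℝ (2*k+1) := by
      have := T_add_two ℝ (2*k+1)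
      convert this using 2 <;> push_cast <;> ring
    constructor
    · refine ⟨?_, ?_, ?_⟩
      · push_cast
        rw [hrec1, Polynomial.coeff_sub, coeff_two_X_mul_zero, he0]; ring
      · push_cast
        rw [hrec1, Polynomial.coeff_sub, show Polynomial.coeff (2*X*T ℝ (2*(k:ℤ)+1)) 1 = 2 * (T ℝ (2*(k:ℤ)+1)).coeff 0 from coeff_two_X_mul _ 0, ho0, he1]
        ring
      · push_cast
        rw [hrec1, Polynomial.coeff_sub, show (2:ℕ) = 1+1 from rfl, coeff_two_X_mul, ho1, he2]
        push_cast; ring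
    · refine ⟨?_, ?_, ?_⟩
      · push_cast
        rw [hrec2, Polynomial.coeff_sub, coeff_two_X_mul_zero, ho0]; ring
      · push_cast
        rw [hrec2, Polynomial.coeff_sub, show Polynomial.coeff (2*X*T ℝ (2*((k:ℤ)+1))) 1 = 2 * (T ℝ (2*((k:ℤ)+1))).coeff 0 from coeff_two_X_mul _ 0, ho1]
        rw [hrec1, Polynomial.coeff_sub, coeff_two_X_mul_zero, he0]
        push_cast; ring
      · push_cast
        rw [hrec2, Polynomial.coeff_sub, show (2:ℕ) = 1+1 from rfl, coeff_two_X_mul, ho2]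
        rw [hrec1, Polynomial.coeff_sub, show Polynomial.coeff (2*X*T ℝ (2*(k:ℤ)+1)) 1 = 2 * (T ℝ (2*(k:ℤ)+1)).coeff 0 from coeff_two_X_mul _ 0, ho0, he1]
        ring

lemma T_natDegree_le (n : ℕ) : (T ℝ (n:ℤ)).natDegree ≤ n := by
  induction n using Nat.strong_induction_on with
  | _ n ih =>
    match n with
    | 0 => simp [T_zero]
    | 1 => simp [T_one]
    | (k+2) =>
      have hrec : T ℝ ((k:ℤ)+2) = 2*X*T ℝ ((k:ℤ)+1) - T ℝ (k:ℤ) := T_add_two ℝ k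
      have h1 : ((k+2 : ℕ) : ℤ) = (k:ℤ)+2 := by push_cast; ring
      have h2 : ((k+1 : ℕ) : ℤ) = (k:ℤ)+1 := by push_cast; ring
      rw [h1, hrec]
      refine le_trans (Polynomial.natDegree_sub_le _ _) ?_
      have ha : (2*X*T ℝ ((k:ℤ)+1)).natDegree ≤ k+2 := by
        refine le_trans (Polynomial.natDegree_mul_le) ?_
        have hb : (2*X : Polynomial ℝ).natDegree ≤ 1 := by
          refine le_trans (Polynomial.natDegree_mul_le) ?_
          simp
        have hc := ih (k+1) (by omega)
        rw [h2] at hc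
        omega
      have hd := ih k (by omega)
      omega

lemma T_eval_node {m : ℕ} (hm : 1 ≤ m) (i : ℕ) :
    (T ℝ (m:ℤ)).eval (xn m i) = (-1)^i := by
  have h0 : (m:ℝ) ≠ 0 := by positivity
  rw [xn, Polynomial.Chebyshev.T_real_cos]
  rw [show ((m:ℤ):ℝ) * ((i:ℝ) * Real.pi / m) = i * Real.pi by push_cast; field_simp]
  exact cos_nat_pi i

lemma deriv_eval_zero_interp {m : ℕ} (hm : 1 ≤ m) (f : Polynomial ℝ) (hdeg : f.natDegree ≤ m) :
    (Polynomial.derivative f).eval 0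
      = ∑ i ∈ range (m+1), (f.eval (xn m i) / Dv m i) * ((Polynomial.derivative (Np m i)).eval 0) := by
  conv_lhs => rw [interp hm f hdeg]
  rw [Polynomial.derivative_sum, Polynomial.eval_finset_sum]
  apply Finset.sum_congr rfl
  intro i _
  rw [Polynomial.derivative_C_mul, Polynomial.eval_mul, Polynomial.eval_C]

lemma xn_mul_uval {m : ℕ} {i : ℕ} (hi : i ≤ m) :
    xn m i * uval m i = -((om m).eval 0) := by
  have h := om_eq hi
  have : (om m).eval 0 = (0 - xn m i) * uval m i := by
    rw [h, Polynomial.eval_mul, Polynomial.eval_sub, Polynomial.eval_X, Polynomial.eval_C, uval]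
  rw [this]; ring

lemma neg_one_sq_pow (i : ℕ) : ((-1:ℝ)^i) * ((-1:ℝ)^i) = 1 := by
  rcases Nat.even_or_odd i with h | h
  · rw [h.neg_one_pow]; norm_num
  · rw [h.neg_one_pow]; norm_num

lemma L1 {m : ℕ} (hmo : Odd m) (B : Polynomial ℝ) (hdeg : B.natDegree ≤ m)
    (hb : ∀ i, i ≤ m → |B.eval (xn m i)| ≤ 1) :
    (Polynomial.derivative B).eval 0 ≤ m := by
  have hm : 1 ≤ m := hmo.pos
  have hx : ∀ i, i ≤ m → xn m i ≠ 0 := fun i hi =>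
    xn_ne_zero hm (by obtain ⟨k,hk⟩ := hmo; omega) hi
  set w0 : ℝ := (om m).eval 0 with hw0
  set c : ℕ → ℝ := fun i => (-w0) / (xn m i ^ 2 * ((-1)^i * Dv m i)) with hc
  have hden : ∀ i, i ≤ m → 0 < xn m i ^ 2 * ((-1)^i * Dv m i) := by
    intro i hi
    have hxi := hx i hi
    have h2 : 0 < xn m i ^ 2 := by
      rcases hxi.lt_or_gt with h | h
      · nlinarith
      · nlinarith
    exact mul_pos h2 (Dv_sign hm hi)
  have hWc : ∀ i, i ≤ m → (Polynomial.derivative (Np m i)).eval 0 / Dv m i = (-1)^i * c i := by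
    intro i hi
    have hxi := hx i hi
    have hDi := Dv_ne_zero hm hi
    have hui := xn_mul_uval hi
    rw [Np_deriv_zero hmo hi, hc]
    have hsq' : (-1:ℝ)^(i*2) = 1 := by rw [pow_mul, pow_two, neg_one_sq_pow i]
    field_simp
    linear_combination hui
  have hterm : ∀ f : Polynomial ℝ, f.natDegree ≤ m →
      (Polynomial.derivative f).eval 0
        = ∑ i ∈ range (m+1), f.eval (xn m i) * ((-1)^i * c i) := by
    intro f hf
    rw [deriv_eval_zero_interp hm f hf]
    apply Finset.sum_congr rfl
    intro i hi
    have him : i ≤ m := Nat.lt_succ_iff.mp (Finset.mem_range.mp hi)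
    rw [div_mul_eq_mul_div, mul_div_assoc, hWc i him]
  have hB := hterm B hdeg
  have hT := hterm (T ℝ (m:ℤ)) (T_natDegree_le m)
  have hTval : ∀ i ∈ range (m+1), (T ℝ (m:ℤ)).eval (xn m i) * ((-1)^i * c i) = c i := by
    intro i hi
    rw [T_eval_node hm i, ← mul_assoc, neg_one_sq_pow i, one_mul]
  rw [Finset.sum_congr rfl hTval] at hT
  obtain ⟨j, hj⟩ := hmo
  have hTd : (Polynomial.derivative (T ℝ (m:ℤ))).eval 0 = (-1)^j * (2*j+1) := by
    rw [← Polynomial.coeff_zero_eq_eval_zero, Polynomial.coeff_derivative]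
    have h12 := (T_coeff012 j).2.2.1
    rw [show ((m:ℤ)) = 2*(j:ℤ)+1 by exact_mod_cast congrArg (Nat.cast : ℕ → ℤ) hj]
    rw [h12]
    push_cast
    ring
  -- bound each term of hB
  have hstep : (Polynomial.derivative B).eval 0 ≤ ∑ i ∈ range (m+1), |c i| := by
    rw [hB]
    apply Finset.sum_le_sum
    intro i hi
    have him : i ≤ m := Nat.lt_succ_iff.mp (Finset.mem_range.mp hi)
    calc B.eval (xn m i) * ((-1)^i * c i) ≤ |B.eval (xn m i) * ((-1)^i * c i)| := le_abs_self _
      _ = |B.eval (xn m i)| * |c i| := by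
          rw [abs_mul, abs_mul, abs_pow, abs_neg, abs_one, one_pow, one_mul]
      _ ≤ 1 * |c i| := by
          apply mul_le_mul_of_nonneg_right (hb i him) (abs_nonneg _)
      _ = |c i| := one_mul _
  have hm' : ((-1:ℝ)^j * (2*j+1)) ≤ m ∧ -((-1:ℝ)^j * (2*j+1)) ≤ m := by
    have hmr : (m:ℝ) = 2*j+1 := by rw [hj]; push_cast; ring
    rcases Nat.even_or_odd j with h | h
    · rw [h.neg_one_pow]; constructor <;> nlinarith [hmr]
    · rw [h.neg_one_pow]; constructor <;> nlinarith [hmr]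
  rcases le_or_gt w0 0 with hc0 | hc0
  · have habs : ∀ i ∈ range (m+1), |c i| = c i := by
      intro i hi
      have him : i ≤ m := Nat.lt_succ_iff.mp (Finset.mem_range.mp hi)
      exact abs_of_nonneg (div_nonneg (by linarith) (le_of_lt (hden i him)))
    rw [Finset.sum_congr rfl habs] at hstep
    calc (Polynomial.derivative B).eval 0 ≤ ∑ i ∈ range (m+1), c i := hstep
      _ = (-1)^j * (2*j+1) := by rw [← hT, hTd]
      _ ≤ m := hm'.1
  · have habs : ∀ i ∈ range (m+1), |c i| = -(c i) := by
      intro i hi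
      have him : i ≤ m := Nat.lt_succ_iff.mp (Finset.mem_range.mp hi)
      apply abs_of_nonpos
      apply div_nonpos_of_nonpos_of_nonneg (by linarith) (le_of_lt (hden i him))
    rw [Finset.sum_congr rfl habs] at hstep
    calc (Polynomial.derivative B).eval 0 ≤ ∑ i ∈ range (m+1), -(c i) := hstep
      _ = -((-1)^j * (2*j+1)) := by rw [Finset.sum_neg_distrib, ← hT, hTd]
      _ ≤ m := hm'.2

lemma deriv2_eval_zero_interp {m : ℕ} (hm : 1 ≤ m) (f : Polynomial ℝ) (hdeg : f.natDegree ≤ m) :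
    (Polynomial.derivative (Polynomial.derivative f)).eval 0
      = ∑ i ∈ range (m+1), (f.eval (xn m i) / Dv m i)
          * ((Polynomial.derivative (Polynomial.derivative (Np m i))).eval 0) := by
  conv_lhs => rw [interp hm f hdeg]
  rw [Polynomial.derivative_sum, Polynomial.derivative_sum, Polynomial.eval_finset_sum]
  apply Finset.sum_congr rfl
  intro i _
  rw [Polynomial.derivative_C_mul, Polynomial.derivative_C_mul, Polynomial.eval_mul,
    Polynomial.eval_C]

section L2sec

variable {m : ℕ} (hme : Even m) (hm : 1 ≤ m)

lemma half_le : m/2 ≤ m := Nat.div_le_self m 2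

lemma xn_ne_zero' (hme : Even m) (hm : 1 ≤ m) {i : ℕ} (hi : i ≤ m) (hne : i ≠ m/2) :
    xn m i ≠ 0 := by
  apply xn_ne_zero hm ?_ hi
  obtain ⟨k, rfl⟩ := hme
  omega

lemma uval_eq_zero (hme : Even m) (hm : 1 ≤ m) {i : ℕ} (hi : i ≤ m) (hne : i ≠ m/2) :
    uval m i = 0 := by
  rw [uval_eq]
  apply Finset.prod_eq_zero (i := m/2)
  · simp only [Finset.mem_erase, Finset.mem_range, Nat.lt_succ_iff]
    exact ⟨fun h => hne h.symm, half_le⟩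
  · rw [xn_half hm hme, neg_zero]

lemma om_deriv_eval_zero' (hme : Even m) (hm : 1 ≤ m) :
    (Polynomial.derivative (om m)).eval 0 = uval m (m/2) := by
  rw [om_derivative, Polynomial.eval_finset_sum]
  rw [Finset.sum_eq_single (m/2)]
  · rfl
  · intro j hj hne
    exact uval_eq_zero hme hm (Nat.lt_succ_iff.mp (Finset.mem_range.mp hj)) hne
  · intro h
    exact absurd (Finset.mem_range.mpr (Nat.lt_succ_iff.mpr (half_le))) h

lemma Np_deriv_zero' (hme : Even m) (hm : 1 ≤ m) {i : ℕ} (hi : i ≤ m) (hne : i ≠ m/2) :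
    (Polynomial.derivative (Np m i)).eval 0 = -(uval m (m/2)) / xn m i := by
  have hxi := xn_ne_zero' hme hm hi hne
  have h1 : Polynomial.derivative (om m)
      = Np m i + (X - C (xn m i)) * Polynomial.derivative (Np m i) := by
    rw [om_eq hi, Polynomial.derivative_mul]
    simp
  have h2 := om_deriv_eval_zero' hme hm
  rw [h1] at h2
  simp only [Polynomial.eval_add, Polynomial.eval_mul, Polynomial.eval_sub,
    Polynomial.eval_X, Polynomial.eval_C] at h2
  rw [← uval] at h2
  rw [uval_eq_zero hme hm hi hne] at h2
  field_simp
  linarith [h2]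

lemma sum_t_zero (hme : Even m) (hm : 1 ≤ m) :
    (Polynomial.derivative (Np m (m/2))).eval 0 = 0 := by
  have hhalf : m - m/2 = m/2 := by obtain ⟨k, rfl⟩ := hme; omega
  rw [Np, derivative_finset_prod, Polynomial.eval_finset_sum]
  set E := (range (m+1)).erase (m/2) with hE
  have hsimp : ∀ l ∈ E, ((∏ j ∈ E.erase l, (X - C (xn m j)))
      * Polynomial.derivative (X - C (xn m l))).eval 0 = ∏ j ∈ E.erase l, (-(xn m j)) := by
    intro l _
    rw [Polynomial.derivative_sub, Polynomial.derivative_X, Polynomial.derivative_C, sub_zero,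
      mul_one, Polynomial.eval_prod]
    apply Finset.prod_congr rfl
    intro j _
    simp
  rw [Finset.sum_congr rfl hsimp]
  set t : ℕ → ℝ := fun l => ∏ j ∈ E.erase l, (-(xn m j)) with ht
  have hmemE : ∀ a, a ∈ E ↔ (a ≤ m ∧ a ≠ m/2) := by
    intro a
    simp only [hE, Finset.mem_erase, Finset.mem_range, Nat.lt_succ_iff]
    tauto
  have hrefl : ∀ l ∈ E, m - l ∈ E := by
    intro l hl
    rw [hmemE] at *
    obtain ⟨k, rfl⟩ := hme
    omega
  have h1 : ∑ l ∈ E, t l = ∑ l ∈ E, t (m - l) := by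
    apply Finset.sum_nbij' (fun a => m - a) (fun a => m - a)
    · exact hrefl
    · exact hrefl
    · intro a ha; rw [hmemE] at ha; omega
    · intro a ha; rw [hmemE] at ha; omega
    · intro a ha
      rw [hmemE] at ha
      congr 1
      omega
  have h2 : ∀ l ∈ E, t (m - l) = - t l := by
    intro l hl
    rw [hmemE] at hl
    have hcard : #(E.erase l) = m - 1 := by
      rw [Finset.card_erase_of_mem (by rw [hmemE]; exact hl), hE,
        Finset.card_erase_of_mem (by simp [Nat.lt_succ_iff, half_le]), Finset.card_range]
      omega
    have hstep : t (m - l) = ∏ j ∈ E.erase l, xn m j := by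
      rw [ht]
      apply Finset.prod_nbij' (fun a => m - a) (fun a => m - a)
      · intro a ha
        simp only [Finset.mem_erase] at ha ⊢
        refine ⟨?_, hrefl a ha.2⟩
        rw [hmemE] at ha
        omega
      · intro a ha
        simp only [Finset.mem_erase] at ha ⊢
        constructor
        · rw [hmemE] at ha
          omega
        · exact hrefl a ha.2
      · intro a ha
        simp only [Finset.mem_erase, hmemE] at ha
        omega
      · intro a ha
        simp only [Finset.mem_erase, hmemE] at ha
        omega
      · intro a ha
        simp only [Finset.mem_erase, hmemE] at ha
        exact (xn_reflect hm ha.2.1).symm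
    rw [hstep]
    calc ∏ j ∈ E.erase l, xn m j
        = ∏ j ∈ E.erase l, ((-1) * (-(xn m j))) := by
          apply Finset.prod_congr rfl; intro k _; ring
      _ = (∏ _j ∈ E.erase l, (-1:ℝ)) * ∏ j ∈ E.erase l, (-(xn m j)) := Finset.prod_mul_distrib
      _ = (-1)^(m-1) * t l := by rw [Finset.prod_const, hcard]
      _ = - t l := by
          obtain ⟨k, hk⟩ := hme
          have hko : Odd (m - 1) := by rw [Nat.odd_iff]; omega
          rw [hko.neg_one_pow]
          ring
  rw [Finset.sum_congr rfl h2, Finset.sum_neg_distrib] at h1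
  linarith

lemma sum_inv_zero (hme : Even m) (hm : 1 ≤ m) :
    ∑ i ∈ (range (m+1)).erase (m/2), (xn m i)⁻¹ = 0 := by
  set E := (range (m+1)).erase (m/2) with hE
  have hmemE : ∀ a, a ∈ E ↔ (a ≤ m ∧ a ≠ m/2) := by
    intro a
    simp only [hE, Finset.mem_erase, Finset.mem_range, Nat.lt_succ_iff]
    tauto
  have hrefl : ∀ l ∈ E, m - l ∈ E := by
    intro l hl
    rw [hmemE] at *
    obtain ⟨k, rfl⟩ := hme
    omega
  have h1 : ∑ l ∈ E, (xn m l)⁻¹ = ∑ l ∈ E, (xn m (m - l))⁻¹ := by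
    apply Finset.sum_nbij' (fun a => m - a) (fun a => m - a)
    · exact hrefl
    · exact hrefl
    · intro a ha; rw [hmemE] at ha; omega
    · intro a ha; rw [hmemE] at ha; omega
    · intro a ha
      rw [hmemE] at ha
      congr 2
      omega
  have h2 : ∀ l ∈ E, (xn m (m - l))⁻¹ = -(xn m l)⁻¹ := by
    intro l hl
    rw [hmemE] at hl
    rw [xn_reflect hm hl.1]
    rw [inv_neg]
  rw [Finset.sum_congr rfl h2, Finset.sum_neg_distrib] at h1
  linarith

lemma om_deriv2_eval_zero (hme : Even m) (hm : 1 ≤ m) :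
    (Polynomial.derivative (Polynomial.derivative (om m))).eval 0 = 0 := by
  rw [om_derivative, Polynomial.derivative_sum, Polynomial.eval_finset_sum]
  rw [← Finset.sum_erase_add _ _ (Finset.mem_range.mpr (Nat.lt_succ_iff.mpr half_le))]
  rw [sum_t_zero hme hm, add_zero]
  have h2 : ∀ i ∈ (range (m+1)).erase (m/2),
      (Polynomial.derivative (Np m i)).eval 0 = -(uval m (m/2)) * (xn m i)⁻¹ := by
    intro i hi
    simp only [Finset.mem_erase, Finset.mem_range, Nat.lt_succ_iff] at hi
    rw [Np_deriv_zero' hme hm hi.2 hi.1]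
    rw [div_eq_mul_inv]
  rw [Finset.sum_congr rfl h2, ← Finset.mul_sum, sum_inv_zero hme hm, mul_zero]

lemma Np_deriv2_zero (hme : Even m) (hm : 1 ≤ m) {i : ℕ} (hi : i ≤ m) (hne : i ≠ m/2) :
    (Polynomial.derivative (Polynomial.derivative (Np m i))).eval 0
      = -2 * (uval m (m/2)) / (xn m i)^2 := by
  have hxi := xn_ne_zero' hme hm hi hne
  have h1 : Polynomial.derivative (om m)
      = Np m i + (X - C (xn m i)) * Polynomial.derivative (Np m i) := by
    rw [om_eq hi, Polynomial.derivative_mul]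
    simp
  have h2 : Polynomial.derivative (Polynomial.derivative (om m))
      = Polynomial.derivative (Np m i) + (Polynomial.derivative (Np m i)
          + (X - C (xn m i)) * Polynomial.derivative (Polynomial.derivative (Np m i))) := by
    rw [h1, Polynomial.derivative_add, Polynomial.derivative_mul]
    simp
  have h3 := om_deriv2_eval_zero hme hm
  rw [h2] at h3
  simp only [Polynomial.eval_add, Polynomial.eval_mul, Polynomial.eval_sub,
    Polynomial.eval_X, Polynomial.eval_C] at h3
  rw [Np_deriv_zero' hme hm hi hne] at h3
  field_simp at h3 ⊢
  have h4 : xn m i * (-2 * uval m (m/2)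
      - (Polynomial.derivative (Polynomial.derivative (Np m i))).eval 0 * xn m i ^ 2) = 0 := by
    linear_combination xn m i * h3
  rcases mul_eq_zero.mp h4 with h5 | h5
  · exact absurd h5 hxi
  · linear_combination -h5

lemma eta_sign (hme : Even m) (hm : 1 ≤ m) :
    0 < (-1)^(m/2) * uval m (m/2) := by
  rw [uval_eq]
  apply prod_pos_split half_le
  · intro j hj
    have : 0 < xn m j := xn_pos hm (by obtain ⟨k, rfl⟩ := hme; omega)
    linarith
  · intro j hj hjm
    have : xn m j < 0 := xn_neg hm (by obtain ⟨k, rfl⟩ := hme; omega) hjm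
    linarith

end L2sec

lemma L2 {m : ℕ} (hme : Even m) (hm : 1 ≤ m) (A : Polynomial ℝ) (hdeg : A.natDegree ≤ m)
    (h0 : A.eval 0 = 1) (ha : ∀ i, i ≤ m → |A.eval (xn m i)| ≤ 1) :
    -((m:ℝ)^2) ≤ (Polynomial.derivative (Polynomial.derivative A)).eval 0 := by
  set eta := uval m (m/2) with heta
  have hQ : 0 < (-1)^(m/2) * eta := eta_sign hme hm
  have hA2 := deriv2_eval_zero_interp hm A hdeg
  have hT2 := deriv2_eval_zero_interp hm (T ℝ (m:ℤ)) (T_natDegree_le m)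
  have hT2' : (Polynomial.derivative (Polynomial.derivative (T ℝ (m:ℤ)))).eval 0
      = ∑ i ∈ range (m+1), (-1)^i
          * ((Polynomial.derivative (Polynomial.derivative (Np m i))).eval 0 / Dv m i) := by
    rw [hT2]
    apply Finset.sum_congr rfl
    intro i hi
    rw [div_mul_eq_mul_div, mul_div_assoc, T_eval_node hm i]
  have hA2' : (Polynomial.derivative (Polynomial.derivative A)).eval 0
      = ∑ i ∈ range (m+1), A.eval (xn m i)
          * ((Polynomial.derivative (Polynomial.derivative (Np m i))).eval 0 / Dv m i) := by
    rw [hA2]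
    apply Finset.sum_congr rfl
    intro i _
    rw [div_mul_eq_mul_div, mul_div_assoc]
  have hkey : ∀ i ∈ range (m+1),
      (-1)^(m/2) * ((-1)^i
          * ((Polynomial.derivative (Polynomial.derivative (Np m i))).eval 0 / Dv m i))
        ≤ A.eval (xn m i)
          * ((Polynomial.derivative (Polynomial.derivative (Np m i))).eval 0 / Dv m i) := by
    intro i hi
    have him : i ≤ m := Nat.lt_succ_iff.mp (Finset.mem_range.mp hi)
    set Wi := (Polynomial.derivative (Polynomial.derivative (Np m i))).eval 0 / Dv m i with hWi
    rcases eq_or_ne i (m/2) with rfl | hne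
    · have hval : A.eval (xn m (m/2)) = 1 := by
        rw [xn_half hm hme, h0]
      rw [hval, one_mul, ← mul_assoc, ← pow_add]
      have hev : Even (m/2 + m/2) := ⟨m/2, rfl⟩
      rw [hev.neg_one_pow, one_mul]
    · have hxi := xn_ne_zero' hme hm him hne
      have hDi := Dv_ne_zero hm him
      have hDpos := Dv_sign hm him
      have hx2 : 0 < xn m i ^ 2 := by
        rcases hxi.lt_or_gt with hlt | hlt
        · nlinarith
        · nlinarith
      have hN2 := Np_deriv2_zero hme hm him hne
      have hfac1 : 0 < (-1:ℝ)^(m/2+1)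
          * (Polynomial.derivative (Polynomial.derivative (Np m i))).eval 0 := by
        rw [hN2]
        have hrw : (-1:ℝ)^(m/2+1) * (-2 * eta / (xn m i)^2)
            = 2*((-1)^(m/2) * eta) / (xn m i)^2 := by
          rw [pow_succ]; ring
        rw [hrw]
        positivity
      have hD2 : (0:ℝ) < Dv m i ^ 2 := by
        rcases hDi.lt_or_gt with hlt | hlt
        · nlinarith
        · nlinarith
      have hfac2 : 0 < (-1:ℝ)^i / Dv m i := by
        have hrw : (-1:ℝ)^i / Dv m i = ((-1)^i * Dv m i) / Dv m i ^ 2 := by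
          field_simp
        rw [hrw]
        positivity
      have hsign : 0 < (-1:ℝ)^(m/2+1+i) * Wi := by
        have hrw : (-1:ℝ)^(m/2+1+i) * Wi
            = ((-1)^(m/2+1)
                * (Polynomial.derivative (Polynomial.derivative (Np m i))).eval 0)
              * ((-1)^i / Dv m i) := by
          rw [hWi, pow_add]
          ring
        rw [hrw]
        exact mul_pos hfac1 hfac2
    -- combine with parity of m/2 + i
      have hA1 := abs_le.mp (ha i him)
      rw [← mul_assoc, ← pow_add]
      rcases Nat.even_or_odd (m/2 + i) with hp | hp
      · rw [hp.neg_one_pow, one_mul]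
        have hWneg : Wi < 0 := by
          have : (-1:ℝ)^(m/2+1+i) = -1 := by
            have : Odd (m/2+1+i) := by
              rcases hp with ⟨k, hk⟩
              exact ⟨k, by omega⟩
            rw [this.neg_one_pow]
          rw [this] at hsign
          linarith
        nlinarith [hA1.2]
      · rw [hp.neg_one_pow]
        have hWpos : 0 < Wi := by
          have : (-1:ℝ)^(m/2+1+i) = 1 := by
            have : Even (m/2+1+i) := by
              rcases hp with ⟨k, hk⟩
              exact ⟨k+1, by omega⟩
            rw [this.neg_one_pow]
          rw [this] at hsign
          linarith
        nlinarith [hA1.1]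
  have hsum : (-1:ℝ)^(m/2)
        * (Polynomial.derivative (Polynomial.derivative (T ℝ (m:ℤ)))).eval 0
      ≤ (Polynomial.derivative (Polynomial.derivative A)).eval 0 := by
    rw [hA2', hT2', Finset.mul_sum]
    exact Finset.sum_le_sum hkey
  obtain ⟨j, hj⟩ : ∃ j, m = 2*j := by obtain ⟨k, hk⟩ := hme; exact ⟨k, by omega⟩
  have hhj : m/2 = j := by omega
  have hT2v : (Polynomial.derivative (Polynomial.derivative (T ℝ (m:ℤ)))).eval 0
      = (-1)^(j+1) * (4*(j:ℝ)^2) := by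
    rw [← Polynomial.coeff_zero_eq_eval_zero, Polynomial.coeff_derivative,
      Polynomial.coeff_derivative]
    have h12 := (T_coeff012 j).1.2.2
    rw [show ((m:ℤ)) = 2*(j:ℤ) by exact_mod_cast congrArg (Nat.cast : ℕ → ℤ) hj]
    rw [h12]
    push_cast
    ring
  rw [hT2v, hhj] at hsum
  have hmr : (m:ℝ) = 2*j := by rw [hj]; push_cast; ring
  have hfin : (-1:ℝ)^j * ((-1)^(j+1) * (4*(j:ℝ)^2)) = -((m:ℝ)^2) := by
    rw [pow_succ, hmr]
    linear_combination (-(4:ℝ)*(j:ℝ)^2) * (neg_one_sq_pow j)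
  rw [hfin] at hsum
  exact hsum


lemma hasDerivAt_poly_sin (p : Polynomial ℝ) (θ : ℝ) :
    HasDerivAt (fun t => p.eval (Real.sin t))
      ((Polynomial.derivative p).eval (Real.sin θ) * Real.cos θ) θ :=
  (p.hasDerivAt (Real.sin θ)).comp θ (Real.hasDerivAt_sin θ)

lemma hasDerivAt_sin_mul (κ θ : ℝ) :
    HasDerivAt (fun t => Real.sin (κ*t)) (Real.cos (κ*θ) * κ) θ := by
  have h1 : HasDerivAt (fun t : ℝ => κ*t) κ θ := by
    simpa using (hasDerivAt_id θ).const_mul κ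
  exact (Real.hasDerivAt_sin (κ*θ)).comp θ h1

lemma hasDerivAt_cos_mul (κ θ : ℝ) :
    HasDerivAt (fun t => Real.cos (κ*t)) (-Real.sin (κ*θ) * κ) θ := by
  have h1 : HasDerivAt (fun t : ℝ => κ*t) κ θ := by
    simpa using (hasDerivAt_id θ).const_mul κ
  exact (Real.hasDerivAt_cos (κ*θ)).comp θ h1

lemma second_deriv_nonpos (κ : ℕ) (Ah Bh : Polynomial ℝ)
    (hA0 : Ah.eval 0 = 1) (hB0 : Bh.eval 0 = 0)
    (hA1 : (Polynomial.derivative Ah).eval 0 = 0)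
    (hbound : ∀ x ∈ Set.Icc (-1:ℝ) 1, (Ah.eval x)^2 + (Bh.eval x)^2 ≤ 1) :
    2*(κ:ℝ)*((Polynomial.derivative Bh).eval 0)
      + (Polynomial.derivative (Polynomial.derivative Ah)).eval 0 - (κ:ℝ)^2 ≤ 0 := by
  set B' := Polynomial.derivative Bh with hB'
  set A' := Polynomial.derivative Ah with hA'
  set e : ℝ → ℝ := fun t => Bh.eval (Real.sin t) * Real.sin (κ*t)
      + Ah.eval (Real.sin t) * Real.cos (κ*t) with he_def
  set e1 : ℝ → ℝ := fun t =>
      (B'.eval (Real.sin t) * Real.cos t * Real.sin (κ*t)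
        + Bh.eval (Real.sin t) * (Real.cos (κ*t) * κ))
      + (A'.eval (Real.sin t) * Real.cos t * Real.cos (κ*t)
        + Ah.eval (Real.sin t) * (-Real.sin (κ*t) * κ)) with he1_def
  have he : ∀ t, HasDerivAt e (e1 t) t := by
    intro t
    exact ((hasDerivAt_poly_sin Bh t).mul (hasDerivAt_sin_mul κ t)).add
      ((hasDerivAt_poly_sin Ah t).mul (hasDerivAt_cos_mul κ t))
  have he1_0 : e1 0 = 0 := by
    simp [he1_def, hB0, hA1]
  have hemax : ∀ t, e t ≤ 1 := by
    intro t
    have hb := hbound (Real.sin t) ⟨Real.neg_one_le_sin t, Real.sin_le_one t⟩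
    have htrig := Real.sin_sq_add_cos_sq (κ*t)
    have hcs := sq_nonneg (Bh.eval (Real.sin t) * Real.cos (κ*t)
      - Ah.eval (Real.sin t) * Real.sin (κ*t))
    have h1 : (Bh.eval (Real.sin t) * Real.sin (κ*t)
        + Ah.eval (Real.sin t) * Real.cos (κ*t))^2 ≤ 1 := by
      nlinarith [hb, htrig, hcs]
    have h2 : e t = Bh.eval (Real.sin t) * Real.sin (κ*t)
        + Ah.eval (Real.sin t) * Real.cos (κ*t) := rfl
    nlinarith [h1, h2]
  have he0 : e 0 = 1 := by
    simp [he_def, hA0]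
  -- derivative of e1 at 0
  set q : ℝ := 2*(κ:ℝ)*(B'.eval 0)
      + (Polynomial.derivative A').eval 0 - (κ:ℝ)^2 with hq_def
  have he1d : HasDerivAt e1 q 0 := by
    have t1 : HasDerivAt (fun t => B'.eval (Real.sin t) * Real.cos t * Real.sin (κ*t))
        (((Polynomial.derivative B').eval (Real.sin 0) * Real.cos 0 * Real.cos 0
            + B'.eval (Real.sin 0) * (-Real.sin 0)) * Real.sin (κ*0)
          + B'.eval (Real.sin 0) * Real.cos 0 * (Real.cos (κ*0) * κ)) 0 := by
      exact (((hasDerivAt_poly_sin B' 0).mul (Real.hasDerivAt_cos 0)).mul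
        (hasDerivAt_sin_mul κ 0))
    have t2 : HasDerivAt (fun t => Bh.eval (Real.sin t) * (Real.cos (κ*t) * κ))
        (B'.eval (Real.sin 0) * Real.cos 0 * (Real.cos (κ*0) * κ)
          + Bh.eval (Real.sin 0) * (-Real.sin (κ*0) * κ * κ)) 0 := by
      have hc : HasDerivAt (fun t => Real.cos (κ*t) * κ) (-Real.sin (κ*0) * κ * κ) 0 :=
        (hasDerivAt_cos_mul κ 0).mul_const κ
      exact (hasDerivAt_poly_sin Bh 0).mul hc
    have t3 : HasDerivAt (fun t => A'.eval (Real.sin t) * Real.cos t * Real.cos (κ*t))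
        (((Polynomial.derivative A').eval (Real.sin 0) * Real.cos 0 * Real.cos 0
            + A'.eval (Real.sin 0) * (-Real.sin 0)) * Real.cos (κ*0)
          + A'.eval (Real.sin 0) * Real.cos 0 * (-Real.sin (κ*0) * κ)) 0 := by
      exact (((hasDerivAt_poly_sin A' 0).mul (Real.hasDerivAt_cos 0)).mul
        (hasDerivAt_cos_mul κ 0))
    have t4 : HasDerivAt (fun t => Ah.eval (Real.sin t) * (-Real.sin (κ*t) * κ))
        (A'.eval (Real.sin 0) * Real.cos 0 * (-Real.sin (κ*0) * κ)
          + Ah.eval (Real.sin 0) * (-(Real.cos (κ*0) * κ) * κ)) 0 := by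
      have hs : HasDerivAt (fun t => -Real.sin (κ*t) * κ) (-(Real.cos (κ*0) * κ) * κ) 0 :=
        ((hasDerivAt_sin_mul κ 0).neg).mul_const κ
      exact (hasDerivAt_poly_sin Ah 0).mul hs
    have hsum := ((t1.add t2).add (t3.add t4))
    have : e1 = fun t => (B'.eval (Real.sin t) * Real.cos t * Real.sin (κ*t)
        + Bh.eval (Real.sin t) * (Real.cos (κ*t) * κ))
        + (A'.eval (Real.sin t) * Real.cos t * Real.cos (κ*t)
        + Ah.eval (Real.sin t) * (-Real.sin (κ*t) * κ)) := he1_def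
    rw [this]
    refine hsum.congr_deriv ?_
    simp only [Real.sin_zero, Real.cos_zero, mul_zero, zero_mul, hq_def, hA0, hB0, hA1]
    ring
  -- conclude q ≤ 0
  by_contra hqc
  push_neg at hqc
  have hqpos : 0 < q := hqc
  have hslope := hasDerivAt_iff_tendsto_slope.mp he1d
  have hslope' : Filter.Tendsto (slope e1 0) (nhdsWithin 0 (Set.Ioi 0)) (nhds q) :=
    hslope.mono_left (nhdsWithin_mono 0 (fun x hx => ne_of_gt hx))
  have hev : ∀ᶠ t in nhdsWithin 0 (Set.Ioi 0), q/2 < slope e1 0 t :=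
    hslope'.eventually (eventually_gt_nhds (by linarith))
  rw [Filter.Eventually, Metric.mem_nhdsWithin_iff] at hev
  obtain ⟨ε, hε, hsub⟩ := hev
  have hpos : ∀ t, t ∈ Set.Ioo (0:ℝ) ε → 0 < e1 t := by
    intro t ht
    have hmem : t ∈ Metric.ball (0:ℝ) ε ∩ Set.Ioi 0 := by
      constructor
      · rw [Metric.mem_ball, Real.dist_eq, sub_zero, abs_of_pos ht.1]
        exact ht.2
      · exact ht.1
    have hslopet := hsub hmem
    simp only [Set.mem_setOf_eq, slope_def_field, he1_0, sub_zero] at hslopet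
    have h3 : q/2 * t < e1 t := (lt_div_iff₀ ht.1).mp hslopet
    have ht1 : 0 < t := ht.1
    have h4 : 0 < q/2*t := mul_pos (by linarith : (0:ℝ) < q/2) ht1
    exact lt_trans h4 h3
  obtain ⟨c, hc, hceq⟩ := exists_hasDerivAt_eq_slope e e1 (show (0:ℝ) < ε/2 by linarith)
    (fun x _ => (he x).continuousAt.continuousWithinAt) (fun x _ => he x)
  have hc1 : 0 < e1 c := hpos c ⟨hc.1, by linarith [hc.2]⟩
  have hc2 : e1 c ≤ 0 := by
    rw [hceq, he0]
    apply div_nonpos_of_nonpos_of_nonneg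
    · linarith [hemax (ε/2)]
    · linarith
  linarith

lemma sum_range_even_odd {M : Type*} [AddCommMonoid M] (n : ℕ) (f : ℕ → M) :
    ∑ j ∈ range (2*n), f j = ∑ k ∈ range n, f (2*k) + ∑ k ∈ range n, f (2*k+1) := by
  induction n with
  | zero => simp
  | succ d ih =>
    have h : 2*(d+1) = (2*d) + 1 + 1 := by ring
    rw [h, Finset.sum_range_succ, Finset.sum_range_succ, ih,
      Finset.sum_range_succ, Finset.sum_range_succ (fun k => f (2*k+1))]
    abel

noncomputable def Ap (P : Polynomial ℝ) (r : ℕ) : Polynomial ℝ :=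
  ∑ k ∈ range (r+1), C ((-1)^k * P.coeff (2*k)) * X^(2*k)

noncomputable def Bp (P : Polynomial ℝ) (r : ℕ) : Polynomial ℝ :=
  ∑ k ∈ range (r+1), C ((-1)^k * P.coeff (2*k+1)) * X^(2*k+1)

lemma evalAB (P : Polynomial ℝ) (r : ℕ) (hdeg : P.natDegree ≤ r) (y : ℝ) :
    (P.map Complex.ofRealHom).eval ((y:ℂ) * Complex.I)
      = Complex.ofReal ((Ap P r).eval y) + Complex.ofReal ((Bp P r).eval y) * Complex.I := by
  rw [Polynomial.eval_map,
    Polynomial.eval₂_eq_sum_range' Complex.ofRealHom (n := 2*(r+1)) (by omega)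
      ((y:ℂ) * Complex.I),
    sum_range_even_odd]
  have hsq : ((y:ℂ) * Complex.I)^2 = -((y:ℂ)^2) := by
    rw [mul_pow, Complex.I_sq]; ring
  have heven : ∀ k : ℕ, ((y:ℂ) * Complex.I)^(2*k) = (-1:ℂ)^k * (y:ℂ)^(2*k) := by
    intro k
    rw [pow_mul, hsq, neg_pow, ← pow_mul]
  have hA : Complex.ofReal ((Ap P r).eval y)
      = ∑ k ∈ range (r+1), Complex.ofRealHom (P.coeff (2*k)) * ((y:ℂ) * Complex.I)^(2*k) := by
    rw [Ap, Polynomial.eval_finset_sum, Complex.ofReal_sum]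
    apply Finset.sum_congr rfl
    intro k _
    simp only [Polynomial.eval_mul, Polynomial.eval_C, Polynomial.eval_pow, Polynomial.eval_X]
    rw [heven k, Complex.ofRealHom_eq_coe]
    push_cast
    ring
  have hB : Complex.ofReal ((Bp P r).eval y) * Complex.I
      = ∑ k ∈ range (r+1), Complex.ofRealHom (P.coeff (2*k+1)) * ((y:ℂ) * Complex.I)^(2*k+1) := by
    rw [Bp, Polynomial.eval_finset_sum, Complex.ofReal_sum, Finset.sum_mul]
    apply Finset.sum_congr rfl
    intro k _
    simp only [Polynomial.eval_mul, Polynomial.eval_C, Polynomial.eval_pow, Polynomial.eval_X]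
    rw [show ((y:ℂ)*Complex.I)^(2*k+1) = ((y:ℂ)*Complex.I)^(2*k) * ((y:ℂ)*Complex.I) from pow_succ _ _,
      heven k, Complex.ofRealHom_eq_coe]
    push_cast
    ring
  rw [hA, hB]

lemma Ap_eval_zero (P : Polynomial ℝ) (r : ℕ) : (Ap P r).eval 0 = P.coeff 0 := by
  rw [Ap, Polynomial.eval_finset_sum]
  rw [Finset.sum_eq_single 0]
  · simp
  · intro k _ hk
    simp only [Polynomial.eval_mul, Polynomial.eval_C, Polynomial.eval_pow, Polynomial.eval_X]
    rw [zero_pow (by omega)]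
    ring
  · intro h; exact absurd (Finset.mem_range.mpr (by omega)) h

lemma Bp_eval_zero (P : Polynomial ℝ) (r : ℕ) : (Bp P r).eval 0 = 0 := by
  rw [Bp, Polynomial.eval_finset_sum]
  apply Finset.sum_eq_zero
  intro k _
  simp only [Polynomial.eval_mul, Polynomial.eval_C, Polynomial.eval_pow, Polynomial.eval_X]
  rw [zero_pow (by omega)]
  ring

lemma Ap_coeff_one (P : Polynomial ℝ) (r : ℕ) : (Ap P r).coeff 1 = 0 := by
  rw [Ap, Polynomial.finset_sum_coeff]
  apply Finset.sum_eq_zero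
  intro k _
  rw [Polynomial.coeff_C_mul, Polynomial.coeff_X_pow, if_neg (by omega)]
  ring

lemma Bp_coeff_one (P : Polynomial ℝ) (r : ℕ) : (Bp P r).coeff 1 = P.coeff 1 := by
  rw [Bp, Polynomial.finset_sum_coeff]
  rw [Finset.sum_eq_single 0]
  · simp
  · intro k _ hk
    rw [Polynomial.coeff_C_mul, Polynomial.coeff_X_pow, if_neg (by omega)]
    ring
  · intro h; exact absurd (Finset.mem_range.mpr (by omega)) h

lemma deriv_eval_zero_eq_coeff_one (p : Polynomial ℝ) :
    (Polynomial.derivative p).eval 0 = p.coeff 1 := by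
  rw [← Polynomial.coeff_zero_eq_eval_zero, Polynomial.coeff_derivative]
  norm_num

lemma Ap_eval_neg (P : Polynomial ℝ) (r : ℕ) (y : ℝ) :
    (Ap P r).eval (-y) = (Ap P r).eval y := by
  rw [Ap, Polynomial.eval_finset_sum, Polynomial.eval_finset_sum]
  apply Finset.sum_congr rfl
  intro k _
  simp only [Polynomial.eval_mul, Polynomial.eval_C, Polynomial.eval_pow, Polynomial.eval_X]
  rw [(even_two_mul k).neg_pow]

lemma Bp_eval_neg (P : Polynomial ℝ) (r : ℕ) (y : ℝ) :
    (Bp P r).eval (-y) = -(Bp P r).eval y := by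
  rw [Bp, Polynomial.eval_finset_sum, Polynomial.eval_finset_sum, ← Finset.sum_neg_distrib]
  apply Finset.sum_congr rfl
  intro k _
  simp only [Polynomial.eval_mul, Polynomial.eval_C, Polynomial.eval_pow, Polynomial.eval_X]
  rw [(Nat.odd_iff.mpr (by omega) : Odd (2*k+1)).neg_pow]
  ring

lemma natDeg_term_le (a : ℝ) (n s : ℕ) (h : a ≠ 0 → n ≤ s) : (C a * X^n).natDegree ≤ s := by
  by_cases ha : a = 0
  · simp [ha]
  · rw [Polynomial.natDegree_C_mul_X_pow n a ha]
    exact h ha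

lemma Ap_deg (P : Polynomial ℝ) (r : ℕ) (hdeg : P.natDegree ≤ r) :
    (Ap P r).natDegree ≤ r := by
  apply Polynomial.natDegree_sum_le_of_forall_le
  intro k _
  apply natDeg_term_le
  intro ha
  have : P.coeff (2*k) ≠ 0 := by
    intro h; rw [h] at ha; simp at ha
  have := Polynomial.le_natDegree_of_ne_zero this
  omega

lemma Ap_deg_odd (P : Polynomial ℝ) (r : ℕ) (hdeg : P.natDegree ≤ r) (hro : Odd r) :
    (Ap P r).natDegree ≤ r - 1 := by
  apply Polynomial.natDegree_sum_le_of_forall_le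
  intro k _
  apply natDeg_term_le
  intro ha
  have : P.coeff (2*k) ≠ 0 := by
    intro h; rw [h] at ha; simp at ha
  have := Polynomial.le_natDegree_of_ne_zero this
  obtain ⟨j, hj⟩ := hro
  omega

lemma Bp_deg (P : Polynomial ℝ) (r : ℕ) (hdeg : P.natDegree ≤ r) :
    (Bp P r).natDegree ≤ r := by
  apply Polynomial.natDegree_sum_le_of_forall_le
  intro k _
  apply natDeg_term_le
  intro ha
  have : P.coeff (2*k+1) ≠ 0 := by
    intro h; rw [h] at ha; simp at ha
  have := Polynomial.le_natDegree_of_ne_zero this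
  omega

lemma Bp_deg_even (P : Polynomial ℝ) (r : ℕ) (hdeg : P.natDegree ≤ r) (hre : Even r) :
    (Bp P r).natDegree ≤ r - 1 := by
  apply Polynomial.natDegree_sum_le_of_forall_le
  intro k _
  apply natDeg_term_le
  intro ha
  have : P.coeff (2*k+1) ≠ 0 := by
    intro h; rw [h] at ha; simp at ha
  have := Polynomial.le_natDegree_of_ne_zero this
  obtain ⟨j, hj⟩ := hre
  omega

end IASL

set_option maxHeartbeats 1000000 in
/-- For an explicit Runge-Kutta method with `r ≥ 2` stages (stability
polynomial `P` of degree ≤ r with `P(0) = 1` and `P'(0) = 1`), if the stability region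
`S = {z : |P z| ≤ 1}` contains the imaginary segment `i·[a,b]` with `a < 0 < b`, then
`[a,b] ⊆ [-(r-1), r-1]`. -/
theorem imaginary_axis_stability_limit
    (r : ℕ) (hr : 2 ≤ r) (P : Polynomial ℝ)
    (hdeg : P.natDegree ≤ r)
    (h0 : P.coeff 0 = 1) (h1 : P.coeff 1 = 1)
    (a b : ℝ) (ha : a < 0) (hb : 0 < b)
    (hstab : ∀ ξ ∈ Set.Icc a b,
      ‖(P.map Complex.ofRealHom).eval ((ξ : ℂ) * Complex.I)‖ ≤ 1) :
    Set.Icc a b ⊆ Set.Icc (-((r : ℝ) - 1)) ((r : ℝ) - 1) := by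
  classical
  set A := IASL.Ap P r with hA_def
  set B := IASL.Bp P r with hB_def
  set M := max b (-a) with hM_def
  have hM : 0 < M := lt_of_lt_of_le hb (le_max_left _ _)
  have hMb : b ≤ M := le_max_left _ _
  have hMa : -a ≤ M := le_max_right _ _
  have hMne : M ≠ 0 := ne_of_gt hM
  -- squares bound on [a,b]
  have hkey : ∀ z ∈ Set.Icc a b, (A.eval z)^2 + (B.eval z)^2 ≤ 1 := by
    intro z hz
    have hs := hstab z hz
    rw [IASL.evalAB P r hdeg z] at hs
    have h2 : (A.eval z)^2 + (B.eval z)^2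
        = (‖Complex.ofReal (A.eval z) + Complex.ofReal (B.eval z) * Complex.I‖)^2 := by
      rw [Complex.sq_norm, Complex.normSq_add_mul_I]
    rw [h2]
    nlinarith [norm_nonneg
      (Complex.ofReal (A.eval z) + Complex.ofReal (B.eval z) * Complex.I), hs]
  -- symmetric extension
  have hsym : ∀ y ∈ Set.Icc (-M) M, (A.eval y)^2 + (B.eval y)^2 ≤ 1 := by
    intro y hy
    obtain ⟨hy1, hy2⟩ := hy
    have hmem : (a ≤ y ∧ y ≤ b) ∨ (a ≤ -y ∧ -y ≤ b) := by
      rcases max_cases b (-a) with ⟨h1', h2'⟩ | ⟨h1', h2'⟩ <;>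
        (rcases le_or_gt y b with h3 | h3 <;> rcases le_or_gt a y with h4 | h4) <;>
        first
          | (left; constructor <;> linarith)
          | (right; constructor <;> linarith)
    rcases hmem with h | h
    · exact hkey y ⟨h.1, h.2⟩
    · have := hkey (-y) ⟨h.1, h.2⟩
      rw [IASL.Ap_eval_neg, IASL.Bp_eval_neg, ← hA_def, ← hB_def] at this
      nlinarith [this]
  -- node bounds for scaled polynomials
  have hnodeA : ∀ (m : ℕ), 1 ≤ m → ∀ i, i ≤ m →
      |(A.comp (Polynomial.C M * Polynomial.X)).eval (IASL.xn m i)| ≤ 1 := by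
    intro m hm1 i hi
    rw [Polynomial.eval_comp]
    simp only [Polynomial.eval_mul, Polynomial.eval_C, Polynomial.eval_X]
    obtain ⟨hx1, hx2⟩ := IASL.xn_mem hm1 i
    have hmem : M * IASL.xn m i ∈ Set.Icc (-M) M := by
      constructor <;> nlinarith
    have := hsym _ hmem
    rw [abs_le]
    constructor <;> nlinarith [sq_nonneg (B.eval (M * IASL.xn m i))]
  have hnodeB : ∀ (m : ℕ), 1 ≤ m → ∀ i, i ≤ m →
      |(B.comp (Polynomial.C M * Polynomial.X)).eval (IASL.xn m i)| ≤ 1 := by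
    intro m hm1 i hi
    rw [Polynomial.eval_comp]
    simp only [Polynomial.eval_mul, Polynomial.eval_C, Polynomial.eval_X]
    obtain ⟨hx1, hx2⟩ := IASL.xn_mem hm1 i
    have hmem : M * IASL.xn m i ∈ Set.Icc (-M) M := by
      constructor <;> nlinarith
    have := hsym _ hmem
    rw [abs_le]
    constructor <;> nlinarith [sq_nonneg (A.eval (M * IASL.xn m i))]
  -- degree of scaling map
  have hdegL : (Polynomial.C M * Polynomial.X : Polynomial ℝ).natDegree = 1 :=
    Polynomial.natDegree_C_mul_X M hMne
  -- derivative of scaled B at 0 is M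
  have hBder : (Polynomial.derivative (B.comp (Polynomial.C M * Polynomial.X))).eval 0 = M := by
    rw [Polynomial.derivative_comp, Polynomial.eval_mul, Polynomial.eval_comp]
    simp only [Polynomial.derivative_C_mul, Polynomial.derivative_X, mul_one,
      Polynomial.eval_mul, Polynomial.eval_C, Polynomial.eval_X, mul_zero]
    rw [IASL.deriv_eval_zero_eq_coeff_one, hB_def, IASL.Bp_coeff_one, h1]
    ring
  have hM_le : M ≤ (r:ℝ) - 1 := by
    have hrcast : ((r - 1 : ℕ) : ℝ) = (r:ℝ) - 1 := by
      rw [Nat.cast_sub (by omega)]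
      norm_num
    rcases Nat.even_or_odd r with hre | hro
    · -- r even : L1 on B
      set m := r - 1 with hm_def
      have hm1 : 1 ≤ m := by omega
      have hmo : Odd m := by
        obtain ⟨k, hk⟩ := hre
        rw [Nat.odd_iff]
        omega
      set Bh := B.comp (Polynomial.C M * Polynomial.X) with hBh
      have hdegB : Bh.natDegree ≤ m := by
        refine le_trans (Polynomial.natDegree_comp_le) ?_
        rw [hdegL, mul_one]
        exact IASL.Bp_deg_even P r hdeg hre
      have hL1 := IASL.L1 hmo Bh hdegB (hnodeB m hm1)
      rw [hBh, hBder] at hL1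
      calc M ≤ (m:ℝ) := hL1
        _ = (r:ℝ) - 1 := by rw [hm_def, hrcast]
    · -- r odd : L2 + analysis
      set κ := r - 1 with hκ_def
      have hκ1 : 1 ≤ κ := by omega
      have hκe : Even κ := by
        obtain ⟨k, hk⟩ := hro
        exact ⟨k, by omega⟩
      set Ah := A.comp (Polynomial.C M * Polynomial.X) with hAh
      set Bh := B.comp (Polynomial.C M * Polynomial.X) with hBh
      have hdegA : Ah.natDegree ≤ κ := by
        refine le_trans (Polynomial.natDegree_comp_le) ?_
        rw [hdegL, mul_one]
        exact IASL.Ap_deg_odd P r hdeg hro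
      have hA0 : Ah.eval 0 = 1 := by
        rw [hAh, Polynomial.eval_comp]
        simp only [Polynomial.eval_mul, Polynomial.eval_C, Polynomial.eval_X, mul_zero]
        rw [hA_def, ← Polynomial.coeff_zero_eq_eval_zero]
        rw [show (IASL.Ap P r).coeff 0 = (IASL.Ap P r).eval 0 from
          Polynomial.coeff_zero_eq_eval_zero _]
        rw [IASL.Ap_eval_zero, h0]
      have hB0 : Bh.eval 0 = 0 := by
        rw [hBh, Polynomial.eval_comp]
        simp only [Polynomial.eval_mul, Polynomial.eval_C, Polynomial.eval_X, mul_zero]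
        rw [hB_def, IASL.Bp_eval_zero]
      have hA1 : (Polynomial.derivative Ah).eval 0 = 0 := by
        rw [hAh, Polynomial.derivative_comp, Polynomial.eval_mul, Polynomial.eval_comp]
        simp only [Polynomial.derivative_C_mul, Polynomial.derivative_X, mul_one,
          Polynomial.eval_mul, Polynomial.eval_C, Polynomial.eval_X, mul_zero]
        rw [IASL.deriv_eval_zero_eq_coeff_one, hA_def, IASL.Ap_coeff_one]
        ring
      have hL2 := IASL.L2 hκe hκ1 Ah hdegA hA0 (hnodeA κ hκ1)
      have hbound : ∀ x ∈ Set.Icc (-1:ℝ) 1, (Ah.eval x)^2 + (Bh.eval x)^2 ≤ 1 := by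
        intro x hx
        rw [hAh, hBh, Polynomial.eval_comp, Polynomial.eval_comp]
        simp only [Polynomial.eval_mul, Polynomial.eval_C, Polynomial.eval_X]
        apply hsym
        obtain ⟨hx1, hx2⟩ := hx
        constructor <;> nlinarith
      have han := IASL.second_deriv_nonpos κ Ah Bh hA0 hB0 hA1 hbound
      rw [hBh] at hBder
      rw [hBder] at han
      have hκpos : (0:ℝ) < κ := by
        have : (1:ℝ) ≤ (κ:ℝ) := by exact_mod_cast hκ1
        linarith
      have h2' : 2*(κ:ℝ)*M ≤ 2*(κ:ℝ)*(κ:ℝ) := by nlinarith [han, hL2]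
      have hMκ : M ≤ (κ:ℝ) := le_of_mul_le_mul_left h2' (by linarith)
      calc M ≤ (κ:ℝ) := hMκ
        _ = (r:ℝ) - 1 := by rw [hκ_def, hrcast]
  intro x hx
  obtain ⟨hx1, hx2⟩ := hx
  constructor
  · linarith
  · linarith
end

section
/- In the FSAL scheme (IMEXrk_ls) with q ≥ 2, if the third-order conditions hold (in particular all versions of Eq 1: β̄_{q-1}+ᾱ_q = 1, Eq 2: ᾱ_q(α'_{q-1}+d'_{q-1}+β'_{q-2}) = 1/2, and Eq 4: ᾱ_q(α̃_{q-1}+d̃_{q-1}+β̃_{q-2})(α'_{q-1}+d'_{q-1}+β'_{q-2}) = 1/3, for every choice of primed/tilded/barred coefficients from the explicit or implicit family, with explicit d's equal to 0), then necessarily α_q = α̂_q = 3/4, β_{q-1} = β̂_{q-1} = 1/4, α_{q-1}+β_{q-2} = 2/3, and α̂_{q-1}+d̂_{q-1}+β̂_{q-2} = 2/3. -/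
/-- In the FSAL scheme (IMEXrk_ls) with `q ≥ 2`, if all versions of
Eq 1 (`β̄_{q-1} + ᾱ_q = 1`), Eq 2 (`ᾱ_q(α'_{q-1} + d'_{q-1} + β'_{q-2}) = 1/2`) and
Eq 4 (`ᾱ_q(α̃_{q-1} + d̃_{q-1} + β̃_{q-2})(α'_{q-1} + d'_{q-1} + β'_{q-2}) = 1/3`)
hold — i.e. for every choice of each barred/primed/tilded coefficient from the
explicit or implicit family, the explicit counterpart of `d̂` being `0` — then
`α_q = α̂_q = 3/4`, `β_{q-1} = β̂_{q-1} = 1/4`, `α_{q-1} + β_{q-2} = 2/3`, and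
`α̂_{q-1} + d̂_{q-1} + β̂_{q-2} = 2/3`. -/
theorem third_order_forced_values
    (αq αhq βq1 βhq1 αq1 αhq1 dhq1 βq2 βhq2 : ℝ)
    (hEq1 : ∀ x ∈ ({αq, αhq} : Set ℝ), ∀ b ∈ ({βq1, βhq1} : Set ℝ), b + x = 1)
    (hEq2 : ∀ x ∈ ({αq, αhq} : Set ℝ), ∀ a ∈ ({αq1, αhq1} : Set ℝ),
      ∀ e ∈ ({(0 : ℝ), dhq1} : Set ℝ), ∀ b ∈ ({βq2, βhq2} : Set ℝ),
        x * (a + e + b) = 1 / 2)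
    (hEq4 : ∀ x ∈ ({αq, αhq} : Set ℝ), ∀ a₁ ∈ ({αq1, αhq1} : Set ℝ),
      ∀ e₁ ∈ ({(0 : ℝ), dhq1} : Set ℝ), ∀ b₁ ∈ ({βq2, βhq2} : Set ℝ),
      ∀ a₂ ∈ ({αq1, αhq1} : Set ℝ), ∀ e₂ ∈ ({(0 : ℝ), dhq1} : Set ℝ),
      ∀ b₂ ∈ ({βq2, βhq2} : Set ℝ),
        x * (a₁ + e₁ + b₁) * (a₂ + e₂ + b₂) = 1 / 3) :
    αq = 3 / 4 ∧ αhq = 3 / 4 ∧ βq1 = 1 / 4 ∧ βhq1 = 1 / 4 ∧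
      αq1 + βq2 = 2 / 3 ∧ αhq1 + dhq1 + βhq2 = 2 / 3 := by
  simp only [Set.mem_insert_iff, Set.mem_singleton_iff] at hEq1 hEq2 hEq4
  have h2 := hEq2 αq (Or.inl rfl) αq1 (Or.inl rfl) 0 (Or.inl rfl) βq2 (Or.inl rfl)
  have h4 := hEq4 αq (Or.inl rfl) αq1 (Or.inl rfl) 0 (Or.inl rfl) βq2 (Or.inl rfl)
    αq1 (Or.inl rfl) 0 (Or.inl rfl) βq2 (Or.inl rfl)
  have hs : αq1 + 0 + βq2 = 2 / 3 := by nlinarith [sq_nonneg (αq1 + 0 + βq2 - 2/3)]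
  have hαq : αq = 3 / 4 := by rw [hs] at h2; linarith
  have h2' := hEq2 αhq (Or.inr rfl) αhq1 (Or.inr rfl) dhq1 (Or.inr rfl) βhq2 (Or.inr rfl)
  have h4' := hEq4 αhq (Or.inr rfl) αhq1 (Or.inr rfl) dhq1 (Or.inr rfl) βhq2 (Or.inr rfl)
    αhq1 (Or.inr rfl) dhq1 (Or.inr rfl) βhq2 (Or.inr rfl)
  have hs' : αhq1 + dhq1 + βhq2 = 2 / 3 := by
    nlinarith [sq_nonneg (αhq1 + dhq1 + βhq2 - 2/3)]
  have hαhq : αhq = 3 / 4 := by rw [hs'] at h2'; linarith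
  have hb1 := hEq1 αq (Or.inl rfl) βq1 (Or.inl rfl)
  have hb2 := hEq1 αhq (Or.inr rfl) βhq1 (Or.inr rfl)
  refine ⟨hαq, hαhq, by linarith, by linarith, by linarith, hs'⟩
end

section
/- The stability polynomial of the explicit method of scheme (IMEXrk_ls) is P(z) = 1 + Σ_{k=1}^{q} [ (∏_{j=0}^{k-2} α_{q-j}) · (α_{q-k+1} + β_{q-k}) ] z^k, with conventions ∏_{j=0}^{-1} α_{q-j} = 1 and β_0 = 0. That is, for the strictly lower-triangular (q+1)×(q+1) matrix A with A_{j+1,j} = α_j, A_{j+1,1} additionally incremented by β_{j-1} (first-column entries), and b equal to the last row of A, one has 1 + b^T (I - zA)^{-1} 1 · z = P(z). -/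
open Finset

/-- Explicit tableau of the scheme (IMEXrk_ls): strictly lower triangular with
subdiagonal entries `α` and first-column entries `β`. -/
def expTableau (q : ℕ) (α β : ℕ → ℝ) : Matrix (Fin (q + 1)) (Fin (q + 1)) ℝ :=
  Matrix.of fun i j =>
    (if (j : ℕ) + 1 = (i : ℕ) then α (i : ℕ) else 0) +
    (if (j : ℕ) = 0 ∧ 2 ≤ (i : ℕ) then β ((i : ℕ) - 1) else 0)

/-- Auxiliary recursive solution of `(I - zA) v = 1`. -/
noncomputable def wfun (α β : ℕ → ℝ) (z : ℂ) : ℕ → ℂ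
  | 0 => 1
  | (n+1) => 1 + z * ((α (n+1) : ℂ) * wfun α β z n + (β n : ℂ))

lemma wfun_closed (α β : ℕ → ℝ) (hβ0 : β 0 = 0) (z : ℂ) :
    ∀ n : ℕ, 1 ≤ n →
    z * ((α (n+1) : ℂ) * wfun α β z n + (β n : ℂ)) =
      ∑ k ∈ range (n+1), (∏ j ∈ range k, (α (n+1-j) : ℂ)) *
        ((α (n+1-k) : ℂ) + (β (n-k) : ℂ)) * z^(k+1) := by
  intro n hn
  induction n with
  | zero => omega
  | succ m ih =>
    rcases Nat.eq_or_lt_of_le hn with h1 | h1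
    · -- m = 0, i.e. n = 1
      have hm : m = 0 := by omega
      subst hm
      simp only [wfun]
      rw [Finset.sum_range_succ, Finset.sum_range_succ, Finset.sum_range_zero,
        Finset.prod_range_one, Finset.prod_range_zero]
      norm_num [hβ0]
      ring
    · have hm : 1 ≤ m := by omega
      have IH := ih hm
      rw [Finset.sum_range_succ' _ (m+1)]
      have hterm : ∀ k ∈ range (m+1),
          (∏ j ∈ range (k+1), (α (m+2-j) : ℂ)) *
            ((α (m+2-(k+1)) : ℂ) + (β (m+1-(k+1)) : ℂ)) * z^(k+1+1)
          = (α (m+2) : ℂ) * ((∏ j ∈ range k, (α (m+1-j) : ℂ)) *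
            ((α (m+1-k) : ℂ) + (β (m-k) : ℂ)) * z^(k+1)) * z := by
        intro k hk
        have hprod : (∏ j ∈ range (k+1), (α (m+2-j) : ℂ))
            = (∏ j ∈ range k, (α (m+1-j) : ℂ)) * (α (m+2) : ℂ) := by
          rw [Finset.prod_range_succ']
          simp only [Nat.sub_zero]
          congr 1
          exact Finset.prod_congr rfl fun j _ => by
            rw [show m + 2 - (j+1) = m + 1 - j from by omega]
        have h2 : m + 2 - (k+1) = m + 1 - k := by omega
        have h3 : m + 1 - (k+1) = m - k := by omega
        rw [hprod, h2, h3]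
        ring
      rw [Finset.sum_congr rfl hterm]
      have hsum : ∑ k ∈ range (m+1), (α (m+2) : ℂ) * ((∏ j ∈ range k, (α (m+1-j) : ℂ)) *
            ((α (m+1-k) : ℂ) + (β (m-k) : ℂ)) * z^(k+1)) * z
          = (α (m+2) : ℂ) * (z * ((α (m+1) : ℂ) * wfun α β z m + (β m : ℂ))) * z := by
        rw [IH, Finset.mul_sum, Finset.sum_mul]
      rw [hsum]
      simp only [wfun, Finset.prod_range_zero, Nat.sub_zero, one_mul, pow_one]
      push_cast
      ring

lemma expTableau_map_apply (q : ℕ) (α β : ℕ → ℝ) (i j : Fin (q+1)) :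
    (expTableau q α β).map (fun x : ℝ => (x : ℂ)) i j =
      (if (j : ℕ) + 1 = (i : ℕ) then (α (i : ℕ) : ℂ) else 0) +
      (if (j : ℕ) = 0 ∧ 2 ≤ (i : ℕ) then (β ((i : ℕ) - 1) : ℂ) else 0) := by
  simp [expTableau, Matrix.map_apply, apply_ite (fun x : ℝ => (x : ℂ))]

/-- The vector `w` solves `(I - zA) w = 1`. -/
lemma mulVec_wfun (q : ℕ) (α β : ℕ → ℝ) (hβ0 : β 0 = 0) (z : ℂ) :
    (1 - z • (expTableau q α β).map (fun x : ℝ => (x : ℂ))).mulVec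
        (fun i : Fin (q+1) => wfun α β z (i : ℕ)) = fun _ => 1 := by
  funext i
  rw [Matrix.sub_mulVec, Matrix.one_mulVec, Matrix.smul_mulVec]
  simp only [Pi.sub_apply, Pi.smul_apply, smul_eq_mul]
  rw [Matrix.mulVec]
  simp only [dotProduct]
  have hsum : ∑ j : Fin (q+1),
      (expTableau q α β).map (fun x : ℝ => (x : ℂ)) i j * wfun α β z (j : ℕ)
      = (if 1 ≤ (i : ℕ) then (α (i : ℕ) : ℂ) * wfun α β z ((i : ℕ) - 1) else 0)
        + (if 2 ≤ (i : ℕ) then (β ((i : ℕ) - 1) : ℂ) else 0) := by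
    simp only [expTableau_map_apply, add_mul]
    rw [Finset.sum_add_distrib]
    congr 1
    · by_cases hi : 1 ≤ (i : ℕ)
      · rw [if_pos hi]
        have hlt : (i : ℕ) - 1 < q + 1 := by omega
        rw [Finset.sum_eq_single (⟨(i : ℕ) - 1, hlt⟩ : Fin (q+1))]
        · rw [if_pos (show ((⟨(i : ℕ) - 1, hlt⟩ : Fin (q+1)) : ℕ) + 1 = (i : ℕ) by
            simp only [Fin.val_mk]; omega)]
        · intro b _ hb
          rw [if_neg, zero_mul]
          intro hc
          exact hb (Fin.ext (by simp only [Fin.val_mk]; omega))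
        · simp
      · rw [if_neg hi]
        apply Finset.sum_eq_zero
        intro j _
        rw [if_neg (by omega), zero_mul]
    · by_cases hi : 2 ≤ (i : ℕ)
      · rw [if_pos hi]
        rw [Finset.sum_eq_single (0 : Fin (q+1))]
        · simp [wfun, hi]
        · intro b _ hb
          rw [if_neg, zero_mul]
          rintro ⟨hb0, -⟩
          exact hb (Fin.ext hb0)
        · simp
      · rw [if_neg hi]
        apply Finset.sum_eq_zero
        intro j _
        rw [if_neg (by tauto), zero_mul]
  rw [hsum]
  rcases Nat.eq_zero_or_pos (i : ℕ) with h0 | h0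
  · rw [h0]
    simp [wfun]
  · obtain ⟨m, hm⟩ : ∃ m, (i : ℕ) = m + 1 := ⟨(i : ℕ) - 1, by omega⟩
    rw [hm]
    simp only [wfun, Nat.add_sub_cancel]
    rw [if_pos (by omega)]
    by_cases hm2 : 2 ≤ m + 1
    · rw [if_pos hm2]; ring
    · have : m = 0 := by omega
      subst this
      rw [if_neg hm2]
      simp [hβ0]

lemma stab_matrix_det (q : ℕ) (α β : ℕ → ℝ) (z : ℂ) :
    (1 - z • (expTableau q α β).map (fun x : ℝ => (x : ℂ))).det = 1 := by
  have h : (1 - z • (expTableau q α β).map (fun x : ℝ => (x : ℂ))).BlockTriangular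
      OrderDual.toDual := by
    intro i j hij
    have hij' : (i : ℕ) < (j : ℕ) := hij
    simp only [Pi.sub_apply, Pi.smul_apply, Matrix.sub_apply, Matrix.smul_apply,
      Matrix.one_apply, expTableau_map_apply, smul_eq_mul]
    rw [if_neg (by intro h; exact absurd (Fin.ext_iff.mp h) (by omega)),
      if_neg (by omega), if_neg (by rintro ⟨h1, h2⟩; omega)]
    simp
  rw [Matrix.det_of_lowerTriangular _ h]
  apply Finset.prod_eq_one
  intro i _
  simp only [Matrix.sub_apply, Matrix.smul_apply, Matrix.one_apply_eq,
    expTableau_map_apply, smul_eq_mul]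
  rw [if_neg (by omega), if_neg (by rintro ⟨h1, h2⟩; omega)]
  simp

/-- The stability polynomial of the explicit method of scheme
(IMEXrk_ls) — stability function `1 + z·bᵀ(I - zA)⁻¹·1` with `b` the last row of the
tableau (FSAL) — equals
`P(z) = 1 + Σ_{k=1}^{q} [(∏_{j=0}^{k-2} α_{q-j})(α_{q-k+1} + β_{q-k})] z^k`,
with the conventions that the empty product is `1` and `β_0 = 0`. -/
theorem explicit_stability_polynomial
    (q : ℕ) (hq : 2 ≤ q) (α β : ℕ → ℝ) (hβ0 : β 0 = 0) (z : ℂ) :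
    1 + z * dotProduct
        (fun j => ((expTableau q α β (Fin.last q) j : ℝ) : ℂ))
        (Matrix.mulVec (1 - z • (expTableau q α β).map (fun x : ℝ => (x : ℂ)))⁻¹
          (fun _ => 1))
      = 1 + ∑ k ∈ Finset.Icc 1 q,
          ((∏ j ∈ Finset.range (k - 1), (α (q - j) : ℂ))
            * ((α (q - k + 1) : ℂ) + (β (q - k) : ℂ))) * z ^ k := by
  set M := (expTableau q α β).map (fun x : ℝ => (x : ℂ)) with hM
  have hdet : IsUnit (1 - z • M).det := by
    rw [stab_matrix_det]; exact isUnit_one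
  have hv : (1 - z • M)⁻¹.mulVec (fun _ => 1) = fun i : Fin (q+1) => wfun α β z (i : ℕ) := by
    have h1 := mulVec_wfun q α β hβ0 z
    calc (1 - z • M)⁻¹.mulVec (fun _ => 1)
        = (1 - z • M)⁻¹.mulVec ((1 - z • M).mulVec (fun i : Fin (q+1) => wfun α β z (i : ℕ))) := by
          rw [h1]
      _ = ((1 - z • M)⁻¹ * (1 - z • M)).mulVec (fun i : Fin (q+1) => wfun α β z (i : ℕ)) :=
          Matrix.mulVec_mulVec _ _ _
      _ = fun i : Fin (q+1) => wfun α β z (i : ℕ) := by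
          rw [Matrix.nonsing_inv_mul _ hdet, Matrix.one_mulVec]
  rw [hv]
  have hdot : dotProduct
      (fun j => ((expTableau q α β (Fin.last q) j : ℝ) : ℂ))
      (fun i : Fin (q+1) => wfun α β z (i : ℕ))
      = (α q : ℂ) * wfun α β z (q - 1) + (β (q - 1) : ℂ) := by
    simp only [dotProduct, expTableau, Matrix.of_apply, Fin.val_last]
    push_cast [apply_ite (fun x : ℝ => (x : ℂ))]
    simp only [add_mul]
    rw [Finset.sum_add_distrib]
    congr 1
    · have hlt : q - 1 < q + 1 := by omega
      rw [Finset.sum_eq_single (⟨q - 1, hlt⟩ : Fin (q+1))]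
      · rw [if_pos (show ((⟨q - 1, hlt⟩ : Fin (q+1)) : ℕ) + 1 = q by
          simp only [Fin.val_mk]; omega)]
      · intro b _ hb
        rw [if_neg, zero_mul]
        intro hc
        exact hb (Fin.ext (by simp only [Fin.val_mk]; omega))
      · simp
    · rw [Finset.sum_eq_single (0 : Fin (q+1))]
      · rw [if_pos ⟨rfl, hq⟩]
        simp [wfun]
      · intro b _ hb
        rw [if_neg, zero_mul]
        rintro ⟨hb0, -⟩
        exact hb (Fin.ext hb0)
      · simp
  rw [hdot]
  obtain ⟨n, hn⟩ : ∃ n, q = n + 1 := ⟨q - 1, by omega⟩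
  have hn1 : 1 ≤ n := by omega
  have hc := wfun_closed α β hβ0 z n hn1
  have hq1 : q - 1 = n := by omega
  rw [hn, Nat.add_sub_cancel, hc]
  congr 1
  have himg : Finset.Icc 1 (n+1) = Finset.image (· + 1) (range (n+1)) := by
    ext x
    simp only [Finset.mem_Icc, Finset.mem_image, Finset.mem_range]
    constructor
    · rintro ⟨h1, h2⟩
      exact ⟨x - 1, by omega, by omega⟩
    · rintro ⟨a, ha, rfl⟩
      omega
  rw [himg, Finset.sum_image (by intro a _ b _ h; simp only at h; omega)]
  apply Finset.sum_congr rfl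
  intro k hk
  have hk' : k ≤ n := by simpa [Nat.lt_succ_iff] using hk
  have e1 : k + 1 - 1 = k := by omega
  have e2 : n + 1 - (k+1) + 1 = n + 1 - k := by omega
  have e3 : n + 1 - (k+1) = n - k := by omega
  rw [e1, e2, e3]
end
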